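/- The eigenvalues of the Kronecker sum A ⊗ I + I ⊗ B of two square matrices A (n×n) and B (m×m) over an algebraically closed field are exactly all sums μ + θ where μ is an eigenvalue of A and θ is an eigenvalue of B. -/

import Mathlib

open Kronecker Matrix

private lemma aux_mem_spec_iff_det {F : Type} [Field F] {ι : Type} [Fintype ι] [DecidableEq ι]
    (M : Matrix ι ι F) (μ : F) :
    μ ∈ spectrum F M ↔ (μ • (1 : Matrix ι ι F) - M).det = 0 := by
  simp [spectrum.mem_iff, Algebra.algebraMap_eq_smul_one, Matrix.isUnit_iff_isUnit_det,
    isUnit_iff_ne_zero]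

open Polynomial in
private lemma aux_eval_charpoly {F : Type} [Field F] {k : ℕ}
    (M : Matrix (Fin k) (Fin k) F) (t : F) :
    (Matrix.charpoly M).eval t = (t • (1 : Matrix (Fin k) (Fin k) F) - M).det := by
  rw [Matrix.charpoly, ← Polynomial.coe_evalRingHom, RingHom.map_det]
  congr 1
  ext i j
  by_cases h : i = j
  · subst h; simp [Matrix.charmatrix_apply_eq, Matrix.smul_apply, Matrix.one_apply]
  · simp [Matrix.charmatrix_apply_ne _ _ _ h, Matrix.smul_apply, Matrix.one_apply, h]

open Polynomial in
private lemma aux_aeval_comm {F : Type} [Field F] {n m : ℕ}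
    (A : Matrix (Fin n) (Fin n) F) (M : Matrix (Fin m) (Fin m) F)
    (X : Matrix (Fin n) (Fin m) F) (h : A * X = X * M) (p : F[X]) :
    (aeval A p) * X = X * (aeval M p) := by
  induction p using Polynomial.induction_on' with
  | add p q hp hq =>
    rw [map_add, map_add, Matrix.add_mul, Matrix.mul_add, hp, hq]
  | monomial k c =>
    have hk : A ^ k * X = X * M ^ k := by
      induction k with
      | zero => simp
      | succ k ih =>
        rw [pow_succ, pow_succ, Matrix.mul_assoc, h, ← Matrix.mul_assoc, ih, Matrix.mul_assoc]
    simp [aeval_monomial, Algebra.algebraMap_eq_smul_one, Matrix.smul_mul, Matrix.mul_smul,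
      Matrix.mul_assoc, hk]

private lemma aux_kron_mulVec {F : Type} [Field F] {n m : ℕ}
    (A : Matrix (Fin n) (Fin n) F) (B : Matrix (Fin m) (Fin m) F)
    (v : Fin n × Fin m → F) (i : Fin n) (j : Fin m) :
    ((A ⊗ₖ (1 : Matrix (Fin m) (Fin m) F) + (1 : Matrix (Fin n) (Fin n) F) ⊗ₖ B) *ᵥ v) (i, j) =
      (∑ k, A i k * v (k, j)) + ∑ l, B j l * v (i, l) := by
  simp only [Matrix.mulVec, dotProduct, Fintype.sum_prod_type, Matrix.add_apply,
    Matrix.kroneckerMap_apply, Matrix.one_apply, add_mul, Finset.sum_add_distrib]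
  have t1 : ∀ k, ∑ l, (A i k * if j = l then (1:F) else 0) * v (k, l) = A i k * v (k, j) := by
    intro k
    rw [Fintype.sum_eq_single j (fun l hl => by simp [Ne.symm hl])]
    simp
  have t2 : ∀ l, ∑ k, ((if i = k then (1:F) else 0) * B j l) * v (k, l) = B j l * v (i, l) := by
    intro l
    rw [Fintype.sum_eq_single i (fun k hk => by simp [Ne.symm hk])]
    simp
  rw [Finset.sum_comm (f := fun k l => ((if i = k then (1:F) else 0) * B j l) * v (k, l))]
  simp only [t1, t2]

theorem stmt_17 (F : Type) [Field F] [IsAlgClosed F] (n m : ℕ)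
    (A : Matrix (Fin n) (Fin n) F) (B : Matrix (Fin m) (Fin m) F) :
    spectrum F (A ⊗ₖ (1 : Matrix (Fin m) (Fin m) F) + (1 : Matrix (Fin n) (Fin n) F) ⊗ₖ B) =
      Set.image2 (· + ·) (spectrum F A) (spectrum F B) := by
  set K := A ⊗ₖ (1 : Matrix (Fin m) (Fin m) F) + (1 : Matrix (Fin n) (Fin n) F) ⊗ₖ B with hK
  ext lam
  constructor
  · -- hard direction
    intro hl
    rw [aux_mem_spec_iff_det] at hl
    obtain ⟨v, hv, hv0⟩ := Matrix.exists_mulVec_eq_zero_iff.mpr hl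
    -- turn v into a matrix X with A * X + X * Bᵀ = lam • X
    set X : Matrix (Fin n) (Fin m) F := fun i j => v (i, j) with hX
    have hXne : X ≠ 0 := by
      intro h
      apply hv
      funext p
      have := congrFun (congrFun h p.1) p.2
      simpa [hX] using this
    have hmain : A * X + X * Bᵀ = lam • X := by
      ext i j
      have h1 := congrFun hv0 (i, j)
      simp only [Matrix.sub_mulVec, Matrix.smul_mulVec, Pi.sub_apply, Pi.smul_apply,
        Matrix.one_mulVec, Pi.zero_apply, sub_eq_zero, smul_eq_mul] at h1
      have hKv := aux_kron_mulVec A B v i j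
      rw [← hK] at hKv
      rw [← h1] at hKv
      simp only [Matrix.add_apply, Matrix.mul_apply, Matrix.smul_apply, smul_eq_mul,
        Matrix.transpose_apply]
      simp only [hX]
      rw [hKv]
      congr 1
      exact Finset.sum_congr rfl fun l _ => mul_comm _ _
    -- so A * X = X * (lam • 1 - Bᵀ)
    set M : Matrix (Fin m) (Fin m) F := lam • (1 : Matrix (Fin m) (Fin m) F) - Bᵀ with hM
    have hcomm : A * X = X * M := by
      rw [hM, Matrix.mul_sub, Matrix.mul_smul, Matrix.mul_one, eq_sub_iff_add_eq]
      exact hmain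
    have hchar : X * (Polynomial.aeval M (Matrix.charpoly A)) = 0 := by
      rw [← aux_aeval_comm A M X hcomm, Matrix.aeval_self_charpoly, Matrix.zero_mul]
    have hnu : ¬ IsUnit (Polynomial.aeval M (Matrix.charpoly A)) := by
      intro hu
      obtain ⟨u, hu⟩ := hu
      apply hXne
      have h1 : X * ((u : Matrix (Fin m) (Fin m) F) * (↑u⁻¹ : Matrix (Fin m) (Fin m) F)) = X := by
        rw [Units.mul_inv, Matrix.mul_one]
      have h2 : X * ((u : Matrix (Fin m) (Fin m) F) * (↑u⁻¹ : Matrix (Fin m) (Fin m) F)) = 0 := by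
        rw [← Matrix.mul_assoc, hu, hchar, Matrix.zero_mul]
      exact h1.symm.trans h2
    have hnpos : 0 < n := by
      rcases Function.ne_iff.mp hXne with ⟨i, _⟩
      exact i.pos
    have hdeg : 0 < (Matrix.charpoly A).degree := by
      rw [Matrix.charpoly_degree_eq_dim]
      simp only [Fintype.card_fin]
      exact_mod_cast hnpos
    have h0 : (0 : F) ∈ spectrum F (Polynomial.aeval M (Matrix.charpoly A)) :=
      (spectrum.zero_mem_iff F).mpr hnu
    rw [spectrum.map_polynomial_aeval_of_degree_pos M (Matrix.charpoly A) hdeg] at h0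
    obtain ⟨xi, hxi, hxi0⟩ := h0
    have hxiA : xi ∈ spectrum F A := by
      rw [aux_mem_spec_iff_det, ← aux_eval_charpoly]
      exact hxi0
    have hxiB : lam - xi ∈ spectrum F B := by
      rw [aux_mem_spec_iff_det] at hxi ⊢
      have heq : xi • (1 : Matrix (Fin m) (Fin m) F) - M =
          -(((lam - xi) • (1 : Matrix (Fin m) (Fin m) F) - B))ᵀ := by
        rw [hM]
        ext i j
        simp only [Matrix.sub_apply, Matrix.smul_apply, Matrix.one_apply, Matrix.neg_apply,
          Matrix.transpose_apply, smul_eq_mul]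
        by_cases h : i = j
        · subst h; simp; ring
        · simp [h, (Ne.symm h : ¬ j = i)]
      rw [heq, Matrix.det_neg, Matrix.det_transpose] at hxi
      rcases mul_eq_zero.mp hxi with h | h
      · exact absurd h (pow_ne_zero _ (by simp : (-1 : F) ≠ 0))
      · exact h
    exact ⟨xi, hxiA, lam - xi, hxiB, by ring⟩
  · -- easy direction
    rintro ⟨mu, hmu, th, hth, rfl⟩
    rw [aux_mem_spec_iff_det] at hmu hth ⊢
    obtain ⟨x, hx, hx0⟩ := Matrix.exists_mulVec_eq_zero_iff.mpr hmu
    obtain ⟨y, hy, hy0⟩ := Matrix.exists_mulVec_eq_zero_iff.mpr hth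
    apply Matrix.exists_mulVec_eq_zero_iff.mp
    refine ⟨fun p => x p.1 * y p.2, ?_, ?_⟩
    · obtain ⟨i, hi⟩ := Function.ne_iff.mp hx
      obtain ⟨j, hj⟩ := Function.ne_iff.mp hy
      intro h
      have := congrFun h (i, j)
      simp only [Pi.zero_apply] at this hi hj
      exact hi (by
        rcases mul_eq_zero.mp this with h' | h'
        · exact h'
        · exact absurd h' hj)
    · have hAx : A *ᵥ x = mu • x := by
        have := hx0
        rw [Matrix.sub_mulVec, Matrix.smul_mulVec, Matrix.one_mulVec, sub_eq_zero] at this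
        exact this.symm
      have hBy : B *ᵥ y = th • y := by
        have := hy0
        rw [Matrix.sub_mulVec, Matrix.smul_mulVec, Matrix.one_mulVec, sub_eq_zero] at this
        exact this.symm
      have hKw : K *ᵥ (fun p : Fin n × Fin m => x p.1 * y p.2) =
          (mu + th) • (fun p : Fin n × Fin m => x p.1 * y p.2) := by
        funext p
        obtain ⟨i, j⟩ := p
        have hKv := aux_kron_mulVec A B (fun p : Fin n × Fin m => x p.1 * y p.2) i j
        rw [← hK] at hKv
        have hxi := congrFun hAx i
        have hyj := congrFun hBy j
        simp only [Matrix.mulVec, dotProduct, Pi.smul_apply, smul_eq_mul,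
          Matrix.transpose_apply] at hxi hyj
        rw [hKv]
        simp only [Pi.smul_apply, smul_eq_mul]
        have e1 : ∑ k, A i k * (x k * y j) = (∑ k, A i k * x k) * y j := by
          rw [Finset.sum_mul]; exact Finset.sum_congr rfl fun k _ => by ring
        have e2 : ∑ l, B j l * (x i * y l) = x i * ∑ l, B j l * y l := by
          rw [Finset.mul_sum]; exact Finset.sum_congr rfl fun l _ => by ring
        rw [e1, e2, hxi, hyj]
        ring
      rw [Matrix.sub_mulVec, Matrix.smul_mulVec, Matrix.one_mulVec, hKw, sub_self]
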